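/- Let P be a nonempty finite index set, ε > 0, and for each i ∈ P let λ_i ≥ 0, q_i ≥ 0 and α_i > 0 be given. Let λ̃_1 < λ̃_2 < ... < λ̃_ũ be the distinct values among {λ_i : i ∈ P}, and for u = 1,...,ũ set C_u = {i ∈ P : λ_i ≤ λ̃_u} and γ̃_u = (Σ_{i∈C_u} α_i) / (Σ_{i∈C_u} q_i + ε), with γ̃_0 = 0. Consider f(γ) = Σ_{i∈P} [ max{γ, λ_i}·q_i − α_i·log max{γ, λ_i} ] + ε·γ on the domain D = {γ ≥ 0 : max{γ, λ_i} > 0 for all i ∈ P}. Then f attains its minimum over D, and every minimizer of f over D belongs to the finite set M₂ = {λ̃_1, ..., λ̃_ũ} ∪ {γ̃_0, γ̃_1, ..., γ̃_ũ} (intersected with D). -/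

import Mathlib

open Finset

lemma max_prior_hasDerivAt {ι : Type} [Fintype ι] (ε : ℝ) (lam q α : ι → ℝ)
    (γ₀ : ℝ) (h0 : 0 < γ₀) (hne : ∀ i, lam i ≠ γ₀) :
    HasDerivAt (fun gam : ℝ =>
      (∑ i : ι, (max gam (lam i) * q i - α i * Real.log (max gam (lam i)))) + ε * gam)
      ((∑ i ∈ Finset.univ.filter fun i => lam i < γ₀, (q i - α i / γ₀)) + ε) γ₀ := by
  have hsum : HasDerivAt (fun gam : ℝ =>
      ∑ i : ι, (max gam (lam i) * q i - α i * Real.log (max gam (lam i))))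
      (∑ i : ι, if lam i < γ₀ then q i - α i / γ₀ else 0) γ₀ := by
    apply HasDerivAt.fun_sum
    intro i _
    by_cases h : lam i < γ₀
    · simp only [if_pos h]
      have hg : HasDerivAt (fun x : ℝ => x * q i - α i * Real.log x) (q i - α i / γ₀) γ₀ := by
        have h1 := (hasDerivAt_id γ₀).mul_const (q i)
        have h2 := (Real.hasDerivAt_log h0.ne').const_mul (α i)
        rw [show q i - α i / γ₀ = 1 * q i - α i * γ₀⁻¹ by ring]
        exact h1.sub h2
      apply hg.congr_of_eventuallyEq
      filter_upwards [Ioi_mem_nhds h] with x hx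
      rw [max_eq_left (le_of_lt hx)]
    · simp only [if_neg h]
      have hlt : γ₀ < lam i := lt_of_le_of_ne (not_lt.1 h) (hne i).symm
      apply (hasDerivAt_const γ₀ (lam i * q i - α i * Real.log (lam i))).congr_of_eventuallyEq
      filter_upwards [Iio_mem_nhds hlt] with x hx
      rw [max_eq_right (le_of_lt hx)]
  have hε' : HasDerivAt (fun gam : ℝ => ε * gam) ε γ₀ := by
    simpa using (hasDerivAt_id γ₀).const_mul ε
  have := hsum.add hε'
  rwa [← Finset.sum_filter] at this

lemma max_prior_contOn {ι : Type} [Fintype ι] (ε : ℝ) (lam q α : ι → ℝ) (s : Set ℝ)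
    (hs : ∀ x ∈ s, ∀ i, 0 < max x (lam i)) :
    ContinuousOn (fun gam : ℝ =>
      (∑ i : ι, (max gam (lam i) * q i - α i * Real.log (max gam (lam i)))) + ε * gam) s := by
  apply ContinuousOn.add _ (continuousOn_const.mul continuousOn_id)
  apply continuousOn_finset_sum
  intro i _
  have hmax : ContinuousOn (fun x : ℝ => max x (lam i)) s :=
    (continuous_id.max continuous_const).continuousOn
  exact (hmax.mul continuousOn_const).sub
    (continuousOn_const.mul (hmax.log fun x hx => (hs x hx i).ne'))

lemma max_prior_large {ι : Type} [Fintype ι] [Nonempty ι] (ε : ℝ) (hε : 0 < ε)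
    (lam q α : ι → ℝ) (hq : ∀ i, 0 ≤ q i) (hα : ∀ i, 0 < α i) (B : ℝ) :
    ∃ R : ℝ, 1 ≤ R ∧ ∀ μ, R < μ → B <
      (∑ i : ι, (max μ (lam i) * q i - α i * Real.log (max μ (lam i)))) + ε * μ := by
  set A := ∑ i : ι, α i with hA_def
  have hA : 0 < A := Finset.sum_pos (fun i _ => hα i) univ_nonempty
  set L := Finset.univ.sup' univ_nonempty lam with hL_def
  have hL : ∀ i, lam i ≤ L := fun i => Finset.le_sup' lam (mem_univ i)
  set c := 2 * A / ε with hc_def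
  have hc : 0 < c := by positivity
  set K := A * Real.log c - A with hK_def
  refine ⟨max (max 1 L) (2 / ε * (B + K)), le_trans (le_max_left 1 L) (le_max_left _ _), ?_⟩
  intro μ hμ
  have hμL : L < μ := lt_of_le_of_lt (le_trans (le_max_right 1 L) (le_max_left _ _)) hμ
  have hμ1 : 1 < μ := lt_of_le_of_lt (le_trans (le_max_left 1 L) (le_max_left _ _)) hμ
  have hμ0 : 0 < μ := lt_trans one_pos hμ1
  have hμK : 2 / ε * (B + K) < μ := lt_of_le_of_lt (le_max_right _ _) hμ
  have hmax : ∀ i, max μ (lam i) = μ := fun i => max_eq_left (le_of_lt (lt_of_le_of_lt (hL i) hμL))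
  have hf : (∑ i : ι, (max μ (lam i) * q i - α i * Real.log (max μ (lam i)))) + ε * μ
      = (∑ i : ι, μ * q i) - A * Real.log μ + ε * μ := by
    simp only [hmax]
    rw [Finset.sum_sub_distrib, hA_def, Finset.sum_mul]
  have hlog : Real.log μ ≤ μ / c - 1 + Real.log c := by
    have h1 := Real.log_le_sub_one_of_pos (div_pos hμ0 hc)
    rw [Real.log_div hμ0.ne' hc.ne'] at h1
    linarith
  have hAc : A * (μ / c) = ε / 2 * μ := by
    rw [hc_def]; field_simp
  have hAlog : A * Real.log μ ≤ ε / 2 * μ + K := by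
    have h2 := mul_le_mul_of_nonneg_left hlog hA.le
    rw [mul_add, mul_sub, hAc] at h2
    rw [hK_def]; linarith
  have hsum0 : 0 ≤ ∑ i : ι, μ * q i :=
    Finset.sum_nonneg fun i _ => mul_nonneg hμ0.le (hq i)
  have hεμ : B + K < ε / 2 * μ := by
    have := mul_lt_mul_of_pos_left hμK (half_pos hε)
    have h3 : ε / 2 * (2 / ε * (B + K)) = B + K := by field_simp
    linarith [h3 ▸ this]
  rw [hf]
  nlinarith

lemma max_prior_small {ι : Type} [Fintype ι] (ε : ℝ) (hε : 0 < ε)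
    (lam q α : ι → ℝ) (hlam : ∀ i, 0 ≤ lam i) (hq : ∀ i, 0 ≤ q i) (hα : ∀ i, 0 < α i)
    (i₀ : ι) (hi₀ : lam i₀ = 0) (B : ℝ) :
    ∃ a : ℝ, 0 < a ∧ a ≤ 1 ∧ ∀ μ, 0 < μ → μ < a → B <
      (∑ i : ι, (max μ (lam i) * q i - α i * Real.log (max μ (lam i)))) + ε * μ := by
  classical
  set C := ∑ i : ι, α i * Real.log (max 1 (lam i)) with hC_def
  refine ⟨min 1 (Real.exp (-(C + B + 1) / α i₀)), lt_min one_pos (Real.exp_pos _),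
    min_le_left _ _, ?_⟩
  intro μ hμ0 hμa
  have hμ1 : μ ≤ 1 := le_of_lt (lt_of_lt_of_le hμa (min_le_left _ _))
  have hLB : -(α i₀) * Real.log μ - C ≤
      (∑ i : ι, (max μ (lam i) * q i - α i * Real.log (max μ (lam i)))) + ε * μ := by
    have key : ∀ i : ι, (if i = i₀ then -(α i₀) * Real.log μ else 0)
        - α i * Real.log (max 1 (lam i))
        ≤ max μ (lam i) * q i - α i * Real.log (max μ (lam i)) := by
      intro i
      by_cases hi : i = i₀
      · subst hi
        rw [if_pos rfl, hi₀, max_eq_left hμ0.le, max_eq_left zero_le_one, Real.log_one]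
        nlinarith [mul_nonneg hμ0.le (hq i)]
      · rw [if_neg hi]
        have hpos : 0 < max μ (lam i) := lt_max_iff.2 (Or.inl hμ0)
        have hle : Real.log (max μ (lam i)) ≤ Real.log (max 1 (lam i)) :=
          Real.log_le_log hpos (max_le_max hμ1 le_rfl)
        nlinarith [mul_nonneg (le_of_lt hpos) (hq i),
          mul_le_mul_of_nonneg_left hle (hα i).le]
    have hsum := Finset.sum_le_sum (fun i (_ : i ∈ Finset.univ) => key i)
    rw [Finset.sum_sub_distrib, Finset.sum_ite_eq' Finset.univ i₀, if_pos (mem_univ i₀)] at hsum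
    have hεμ : 0 ≤ ε * μ := mul_nonneg hε.le hμ0.le
    rw [hC_def]; linarith
  have hlog : Real.log μ < -(C + B + 1) / α i₀ := by
    have := Real.log_lt_log hμ0 (lt_of_lt_of_le hμa (min_le_right _ _))
    rwa [Real.log_exp] at this
  have : α i₀ * Real.log μ < -(C + B + 1) := by
    have h2 := mul_lt_mul_of_pos_left hlog (hα i₀)
    rwa [mul_div_cancel₀ _ (hα i₀).ne'] at h2
  linarith

/-- The hyperparameter update step for the weights `γ` in the generalized
maximum-likelihood scheme with the max prior: the function
`f(γ) = ∑ᵢ [max{γ, λᵢ} qᵢ − αᵢ log max{γ, λᵢ}] + ε γ` attains its minimum over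
`D = {γ ≥ 0 : max{γ, λᵢ} > 0 ∀ i}`, and every minimizer belongs to the finite set
`M₂` consisting of the values `λᵢ`, of `0`, and of the candidate stationary points
`(∑_{i : λᵢ ≤ λⱼ} αᵢ) / (∑_{i : λᵢ ≤ λⱼ} qᵢ + ε)`. -/
theorem max_prior_gamma_update_minimizers
    (ι : Type) [Fintype ι] [Nonempty ι] (ε : ℝ) (hε : 0 < ε)
    (lam q α : ι → ℝ) (hlam : ∀ i, 0 ≤ lam i) (hq : ∀ i, 0 ≤ q i) (hα : ∀ i, 0 < α i) :
    let f : ℝ → ℝ := fun gam =>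
      (∑ i : ι, (max gam (lam i) * q i - α i * Real.log (max gam (lam i)))) + ε * gam
    let D : Set ℝ := {gam | 0 ≤ gam ∧ ∀ i : ι, 0 < max gam (lam i)}
    let M : Set ℝ := Set.range lam ∪ {0} ∪
      Set.range (fun j : ι =>
        (∑ i ∈ Finset.univ.filter fun i => lam i ≤ lam j, α i) /
          ((∑ i ∈ Finset.univ.filter fun i => lam i ≤ lam j, q i) + ε))
    (∃ gam ∈ D, ∀ μ ∈ D, f gam ≤ f μ) ∧
      ∀ gam ∈ D, (∀ μ ∈ D, f gam ≤ f μ) → gam ∈ M := by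
  intro f D M
  have h1D : (1:ℝ) ∈ D := ⟨zero_le_one, fun i => lt_max_iff.2 (Or.inl one_pos)⟩
  constructor
  · -- existence of a minimizer
    obtain ⟨R, hR1, hRbig⟩ := max_prior_large ε hε lam q α hq hα (f 1)
    have key : ∃ a : ℝ, 0 ≤ a ∧ a ≤ 1 ∧ (Set.Icc a R ⊆ D) ∧
        ∀ μ ∈ D, μ < a → f 1 < f μ := by
      by_cases hpos : ∀ i, 0 < lam i
      · exact ⟨0, le_refl 0, zero_le_one, fun x hx =>
          ⟨hx.1, fun i => lt_max_iff.2 (Or.inr (hpos i))⟩,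
          fun μ hμ hμ0 => absurd hμ.1 (not_le.2 hμ0)⟩
      · push_neg at hpos
        obtain ⟨i₀, hi₀'⟩ := hpos
        have hi₀ : lam i₀ = 0 := le_antisymm hi₀' (hlam i₀)
        obtain ⟨a, ha0, ha1, hsmall⟩ := max_prior_small ε hε lam q α hlam hq hα i₀ hi₀ (f 1)
        refine ⟨a, ha0.le, ha1, fun x hx => ⟨le_trans ha0.le hx.1,
          fun i => lt_max_iff.2 (Or.inl (lt_of_lt_of_le ha0 hx.1))⟩, ?_⟩
        intro μ hμ hμa
        have hμ0 : 0 < μ := by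
          rcases lt_or_eq_of_le hμ.1 with h | h
          · exact h
          · exfalso; have := hμ.2 i₀; rw [← h, hi₀] at this; simp at this
        exact hsmall μ hμ0 hμa
    obtain ⟨a, ha0, ha1, hIcc, hsmall⟩ := key
    have haR : a ≤ R := le_trans ha1 hR1
    have h1mem : (1:ℝ) ∈ Set.Icc a R := ⟨ha1, hR1⟩
    obtain ⟨γs, hγs, hminOn⟩ := isCompact_Icc.exists_isMinOn ⟨1, h1mem⟩
      (max_prior_contOn ε lam q α (Set.Icc a R) (fun x hx i => (hIcc hx).2 i))
    refine ⟨γs, hIcc hγs, ?_⟩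
    intro μ hμD
    rcases lt_or_ge μ a with h | h
    · exact le_trans (hminOn h1mem) (le_of_lt (hsmall μ hμD h))
    rcases le_or_gt μ R with h' | h'
    · exact hminOn ⟨h, h'⟩
    · exact le_trans (hminOn h1mem) (le_of_lt (hRbig μ h'))
  · -- characterization of minimizers
    intro γ hγD hγmin
    by_cases hzero : γ = 0
    · exact Or.inl (Or.inr hzero)
    by_cases hlamval : ∃ i, lam i = γ
    · exact Or.inl (Or.inl hlamval)
    push_neg at hlamval
    have hγ0 : 0 < γ := lt_of_le_of_ne hγD.1 (Ne.symm hzero)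
    have hloc : IsLocalMin f γ := by
      filter_upwards [Ioi_mem_nhds hγ0] with μ hμ
      exact hγmin μ ⟨le_of_lt hμ, fun i => lt_max_iff.2 (Or.inl hμ)⟩
    have hd := max_prior_hasDerivAt ε lam q α γ hγ0 hlamval
    have h0 := hloc.hasDerivAt_eq_zero hd
    set T := Finset.univ.filter (fun i => lam i < γ) with hT_def
    have hTne : T.Nonempty := by
      by_contra h
      rw [Finset.not_nonempty_iff_eq_empty] at h
      rw [h, Finset.sum_empty] at h0
      linarith
    obtain ⟨j, hjT, hjmax⟩ := T.exists_max_image lam hTne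
    have hjγ : lam j < γ := (Finset.mem_filter.1 hjT).2
    have hTeq : (Finset.univ.filter fun i => lam i ≤ lam j) = T := by
      ext i
      simp only [hT_def, Finset.mem_filter, Finset.mem_univ, true_and]
      exact ⟨fun h => lt_of_le_of_lt h hjγ,
        fun h => hjmax i (Finset.mem_filter.2 ⟨Finset.mem_univ i, h⟩)⟩
    have hQ : (0:ℝ) ≤ ∑ i ∈ T, q i := Finset.sum_nonneg fun i _ => hq i
    have hAT : (0:ℝ) < ∑ i ∈ T, α i := Finset.sum_pos (fun i _ => hα i) hTne
    have hQε : (0:ℝ) < (∑ i ∈ T, q i) + ε := by linarith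
    have hsplit : (∑ i ∈ T, (q i - α i / γ)) = (∑ i ∈ T, q i) - (∑ i ∈ T, α i) / γ := by
      rw [Finset.sum_sub_distrib, Finset.sum_div]
    rw [hsplit] at h0
    have hγeq : γ = (∑ i ∈ T, α i) / ((∑ i ∈ T, q i) + ε) := by
      rw [eq_div_iff hQε.ne']
      field_simp at h0
      linarith
    exact Or.inr ⟨j, by dsimp only; rw [hTeq, ← hγeq]⟩
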